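/- There exists an ordered type alphabet (with arity not compatible with the ordering) for which the subtype relation on types is not transitive. Concretely, with A = {K₁, K₂, L₁, L₂}, #K₁ = #K₂ = 0, #L₁ = #L₂ = 1, and L₁ ≤ K₁ ≤ K₂ ≤ L₂, one has L₁(K₂) ≤ K₁ and K₁ ≤ L₂(K₁), but not L₁(K₂) ≤ L₂(K₁). -/
import Mathlib


/-- Types over a type alphabet `C`: type parameters (indexed by `ℕ`) and
applications of type constructors to lists of types. -/
inductive Ty (C : Type) where
  | param : ℕ → Ty C
  | con : C → List (Ty C) → Ty C

/-- The subtype relation on types: `α ≤ α` for parameters, and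
`K(σ₁,…,σ_m) ≤ L(τ₁,…,τ_n)` iff `K ≤ L` and `σ_i ≤ τ_i` for all `i < min m n`. -/
inductive Subty {C : Type} [LE C] : Ty C → Ty C → Prop where
  | param (n : ℕ) : Subty (.param n) (.param n)
  | con {K L : C} {ss ts : List (Ty C)} :
      K ≤ L →
      (∀ i (h1 : i < ss.length) (h2 : i < ts.length), Subty ss[i] ts[i]) →
      Subty (.con K ss) (.con L ts)

/-- Well-formed types with respect to an arity function `ar`:
every constructor is applied to exactly `ar K` arguments. -/
inductive WF {C : Type} (ar : C → ℕ) : Ty C → Prop where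
  | param (n : ℕ) : WF ar (.param n)
  | con {K : C} {ss : List (Ty C)} :
      ss.length = ar K → (∀ σ ∈ ss, WF ar σ) → WF ar (.con K ss)

/-- The arity function is compatible with the ordering on the type alphabet. -/
def Compatible {C : Type} [LE C] (ar : C → ℕ) : Prop :=
  ∀ K L M : C, K ≤ L → L ≤ M → min (ar K) (ar M) ≤ ar L

/-- The type alphabet of the counterexample: `L₁ ≤ K₁ ≤ K₂ ≤ L₂`. -/
inductive Alpha where
  | L1 | K1 | K2 | L2
deriving DecidableEq

/-- Rank realizing the chain `L₁ ≤ K₁ ≤ K₂ ≤ L₂`. -/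
def Alpha.rank : Alpha → ℕ
  | .L1 => 0 | .K1 => 1 | .K2 => 2 | .L2 => 3

instance : LE Alpha := ⟨fun a b => a.rank ≤ b.rank⟩

/-- Arity: `#K₁ = #K₂ = 0`, `#L₁ = #L₂ = 1`. -/
def Alpha.ar : Alpha → ℕ
  | .L1 => 1 | .K1 => 0 | .K2 => 0 | .L2 => 1

/-- for this ordered type alphabet the arity is not compatible
with the ordering, and the subtype relation on types is not transitive:
`L₁(K₂) ≤ K₁` and `K₁ ≤ L₂(K₁)`, but not `L₁(K₂) ≤ L₂(K₁)`. -/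
theorem subty_not_transitive :
    ¬ Compatible Alpha.ar ∧
    Subty (Ty.con Alpha.L1 [Ty.con Alpha.K2 []]) (Ty.con Alpha.K1 []) ∧
    Subty (Ty.con Alpha.K1 []) (Ty.con Alpha.L2 [Ty.con Alpha.K1 []]) ∧
    ¬ Subty (Ty.con Alpha.L1 [Ty.con Alpha.K2 []])
        (Ty.con Alpha.L2 [Ty.con Alpha.K1 []]) := by
  refine ⟨?_, ?_, ?_, ?_⟩
  · intro h
    have := h .L1 .K1 .L2 (by decide) (by decide)
    simp [Alpha.ar] at this
  · exact .con (by decide) (by intro i h1 h2; simp at h2)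
  · exact .con (by decide) (by intro i h1 h2; simp at h1)
  · intro h
    cases h with
    | con hKL hargs =>
      have := hargs 0 (by simp) (by simp)
      simp at this
      cases this with
      | con h _ =>
        have : Alpha.rank .K2 ≤ Alpha.rank .K1 := h
        simp [Alpha.rank] at this
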